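/- If Z1 and Z2 are independent non-degenerate Gaussian random variables (σ1 > 0 and σ2 > 0), then the product Z1 Z2 is not Gaussian. -/

import Mathlib

open MeasureTheory ProbabilityTheory Real Filter
open scoped NNReal ENNReal

namespace ProdGaussAux

lemma sq_sub_le_sq_add_abs (μ x : ℝ) (hx : 0 ≤ x) : (x - μ)^2 ≤ (x + |μ|)^2 := by
  nlinarith [sq_abs μ, le_abs_self μ, neg_abs_le μ, abs_nonneg μ]

lemma exp_mul_gaussianPDFReal (m : ℝ) (v : ℝ≥0) (hv : v ≠ 0) (t x : ℝ) :
    rexp (t * x) * gaussianPDFReal m v x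
      = rexp (t * m + t ^ 2 * v / 2) * gaussianPDFReal (m + t * v) v x := by
  have hv' : (v : ℝ) ≠ 0 := by exact_mod_cast hv
  simp only [gaussianPDFReal]
  rw [mul_left_comm, ← Real.exp_add, mul_left_comm, ← Real.exp_add, mul_comm,
    mul_comm _ ((Real.sqrt _)⁻¹)]
  congr 2
  field_simp
  ring

lemma integrable_exp_mul_gaussianPDFReal (m : ℝ) (v : ℝ≥0) (hv : v ≠ 0) (t : ℝ) :
    Integrable (fun x => rexp (t * x) * gaussianPDFReal m v x) := by
  have : (fun x => rexp (t * x) * gaussianPDFReal m v x)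
      = fun x => rexp (t * m + t ^ 2 * v / 2) * gaussianPDFReal (m + t * v) v x := by
    funext x; exact exp_mul_gaussianPDFReal m v hv t x
  rw [this]
  exact (integrable_gaussianPDFReal _ _).const_mul _

lemma lintegral_exp_gaussianReal_lt_top (m : ℝ) (v : ℝ≥0) (t : ℝ) :
    ∫⁻ x, ENNReal.ofReal (rexp (t * x)) ∂(gaussianReal m v) < ∞ := by
  rcases eq_or_ne v 0 with hv | hv
  · simp [hv, gaussianReal_zero_var, lintegral_dirac]
  · rw [gaussianReal_of_var_ne_zero m hv,
      lintegral_withDensity_eq_lintegral_mul _ (measurable_gaussianPDF m v)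
        (by fun_prop)]
    have heq : ∀ x, (gaussianPDF m v * fun x => ENNReal.ofReal (rexp (t * x))) x
        = ENNReal.ofReal (rexp (t * x) * gaussianPDFReal m v x) := by
      intro x
      simp only [Pi.mul_apply, gaussianPDF]
      rw [← ENNReal.ofReal_mul (gaussianPDFReal_nonneg m v x), mul_comm]
    simp only [heq]
    exact (integrable_exp_mul_gaussianPDFReal m v hv t).lintegral_lt_top

lemma gaussianPDFReal_ge (μ : ℝ) (v : ℝ≥0) (hv : v ≠ 0) (x : ℝ) (hx : 0 ≤ x) :
    (Real.sqrt (2*π*(v:ℝ)))⁻¹ * rexp (-(x+|μ|)^2/(2*(v:ℝ))) ≤ gaussianPDFReal μ v x := by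
  have hv' : (0:ℝ) < v := NNReal.coe_pos.mpr (pos_iff_ne_zero.mpr hv)
  unfold gaussianPDFReal
  refine mul_le_mul_of_nonneg_left ?_ (by positivity)
  apply Real.exp_le_exp.mpr
  rw [div_le_div_iff_of_pos_right (by positivity)]
  have h1 : (x - μ)^2 ≤ (x + |μ|)^2 := sq_sub_le_sq_add_abs μ x hx
  linarith

lemma inner_bound (μ2 : ℝ) (v2 : ℝ≥0) (hv2 : v2 ≠ 0) (t x : ℝ) (ht : 0 ≤ t) (hx : 0 ≤ x) :
    ENNReal.ofReal ((Real.sqrt (2*π*(v2:ℝ)))⁻¹ * rexp (-(x+1+|μ2|)^2/(2*(v2:ℝ))) * rexp (t*x^2))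
      ≤ ∫⁻ y, ENNReal.ofReal (rexp (t*(x*y))) ∂(gaussianReal μ2 v2) := by
  have hv' : (0:ℝ) < v2 := NNReal.coe_pos.mpr (pos_iff_ne_zero.mpr hv2)
  rw [gaussianReal_of_var_ne_zero _ hv2,
    lintegral_withDensity_eq_lintegral_mul _ (measurable_gaussianPDF _ _) (by fun_prop)]
  refine le_trans ?_ (setLIntegral_le_lintegral (Set.Icc x (x+1)) _)
  have hvol : volume (Set.Icc x (x+1)) = 1 := by
    rw [Real.volume_Icc]; norm_num
  calc ENNReal.ofReal ((Real.sqrt (2*π*(v2:ℝ)))⁻¹ * rexp (-(x+1+|μ2|)^2/(2*(v2:ℝ))) * rexp (t*x^2))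
      = ∫⁻ _ in Set.Icc x (x+1),
        ENNReal.ofReal ((Real.sqrt (2*π*(v2:ℝ)))⁻¹ * rexp (-(x+1+|μ2|)^2/(2*(v2:ℝ)))
          * rexp (t*x^2)) := by
        rw [setLIntegral_const, hvol, mul_one]
  _ ≤ _ := by
      refine setLIntegral_mono' measurableSet_Icc fun y hy => ?_
      obtain ⟨hy1, hy2⟩ := hy
      simp only [Pi.mul_apply, gaussianPDF]
      rw [← ENNReal.ofReal_mul (gaussianPDFReal_nonneg _ _ _)]
      refine ENNReal.ofReal_le_ofReal ?_
      unfold gaussianPDFReal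
      have hle1 : rexp (-(x+1+|μ2|)^2/(2*(v2:ℝ))) ≤ rexp (-(y - μ2)^2/(2*(v2:ℝ))) := by
        apply Real.exp_le_exp.mpr
        rw [div_le_div_iff_of_pos_right (by positivity)]
        have : (y - μ2)^2 ≤ (x+1+|μ2|)^2 := by
          nlinarith [sq_abs μ2, le_abs_self μ2, neg_abs_le μ2, abs_nonneg μ2]
        linarith
      have hle2 : rexp (t*x^2) ≤ rexp (t*(x*y)) := by
        apply Real.exp_le_exp.mpr
        have : x * x ≤ x * y := mul_le_mul_of_nonneg_left hy1 hx
        nlinarith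
      calc (Real.sqrt (2*π*(v2:ℝ)))⁻¹ * rexp (-(x+1+|μ2|)^2/(2*(v2:ℝ))) * rexp (t*x^2)
          ≤ (Real.sqrt (2*π*(v2:ℝ)))⁻¹ * rexp (-(y - μ2)^2/(2*(v2:ℝ))) * rexp (t*(x*y)) := by
            gcongr
      _ = _ := by ring

end ProdGaussAux

open ProdGaussAux

/-- The product of two independent non-degenerate Gaussian random variables is not
Gaussian: its law is not `N(m, v)` for any `m ∈ ℝ`, `v ≥ 0`. -/
theorem product_of_indep_gaussians_not_gaussian
    {Ω : Type*} [MeasureSpace Ω] [IsProbabilityMeasure (ℙ : Measure Ω)]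
    (Z1 Z2 : Ω → ℝ) (μ1 μ2 : ℝ) (σ1 σ2 : ℝ≥0) (hσ1 : 0 < σ1) (hσ2 : 0 < σ2)
    (hZ1 : Measurable Z1) (hZ2 : Measurable Z2)
    (hlaw1 : Measure.map Z1 ℙ = gaussianReal μ1 (σ1 ^ 2))
    (hlaw2 : Measure.map Z2 ℙ = gaussianReal μ2 (σ2 ^ 2))
    (hindep : IndepFun Z1 Z2 ℙ) :
    ∀ (m : ℝ) (v : ℝ≥0),
      Measure.map (fun ω => Z1 ω * Z2 ω) ℙ ≠ gaussianReal m v := by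
  intro m v h
  have hv1 : (σ1^2 : ℝ≥0) ≠ 0 := by positivity
  have hv2 : (σ2^2 : ℝ≥0) ≠ 0 := by positivity
  set V1 : ℝ := ((σ1^2 : ℝ≥0) : ℝ) with hV1def
  set V2 : ℝ := ((σ2^2 : ℝ≥0) : ℝ) with hV2def
  have hV1 : 0 < V1 := NNReal.coe_pos.mpr (pos_iff_ne_zero.mpr hv1)
  have hV2 : 0 < V2 := NNReal.coe_pos.mpr (pos_iff_ne_zero.mpr hv2)
  set t : ℝ := 1/V1 + 1/V2 with htdef
  have ht : 0 < t := by positivity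
  have hmul : Measurable fun ω => Z1 ω * Z2 ω := hZ1.mul hZ2
  -- the exponential moment is finite if the law is Gaussian
  have hfin : ∫⁻ ω, ENNReal.ofReal (rexp (t * (Z1 ω * Z2 ω))) ∂ℙ < ∞ := by
    have h1 : ∫⁻ ω, ENNReal.ofReal (rexp (t * (Z1 ω * Z2 ω))) ∂ℙ
        = ∫⁻ x, ENNReal.ofReal (rexp (t * x)) ∂(Measure.map (fun ω => Z1 ω * Z2 ω) ℙ) :=
      (lintegral_map ((Real.measurable_exp.comp (measurable_id.const_mul t)).ennreal_ofReal)
        hmul).symm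
    rw [h1, h]
    exact lintegral_exp_gaussianReal_lt_top m v t
  -- rewrite as a double integral over the product of the two Gaussian laws
  have hpair : Measure.map (fun ω => (Z1 ω, Z2 ω)) ℙ
      = (gaussianReal μ1 (σ1^2)).prod (gaussianReal μ2 (σ2^2)) := by
    rw [← hlaw1, ← hlaw2]
    exact (indepFun_iff_map_prod_eq_prod_map_map hZ1.aemeasurable hZ2.aemeasurable).mp hindep
  have hdouble : ∫⁻ ω, ENNReal.ofReal (rexp (t * (Z1 ω * Z2 ω))) ∂ℙ
      = ∫⁻ x, ∫⁻ y, ENNReal.ofReal (rexp (t * (x*y)))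
          ∂(gaussianReal μ2 (σ2^2)) ∂(gaussianReal μ1 (σ1^2)) := by
    have h2 : ∫⁻ ω, ENNReal.ofReal (rexp (t * (Z1 ω * Z2 ω))) ∂ℙ
        = ∫⁻ p : ℝ × ℝ, ENNReal.ofReal (rexp (t * (p.1 * p.2)))
            ∂(Measure.map (fun ω => (Z1 ω, Z2 ω)) ℙ) :=
      (lintegral_map ((Real.measurable_exp.comp
        ((measurable_fst.mul measurable_snd).const_mul t)).ennreal_ofReal)
        (hZ1.prodMk hZ2)).symm
    rw [h2, hpair,
      lintegral_prod _ ((by fun_prop :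
        Measurable fun p : ℝ × ℝ => ENNReal.ofReal (rexp (t * (p.1 * p.2)))).aemeasurable)]
  -- constants
  set c1 : ℝ := (Real.sqrt (2*π*V1))⁻¹ with hc1def
  set c2 : ℝ := (Real.sqrt (2*π*V2))⁻¹ with hc2def
  have hc1 : 0 < c1 := by rw [hc1def]; positivity
  have hc2 : 0 < c2 := by rw [hc2def]; positivity
  set E : ℝ → ℝ := fun x => t*x^2 - (x+1+|μ2|)^2/(2*V2) - (x+|μ1|)^2/(2*V1) with hEdef
  -- E tends to infinity
  have hEq : E = fun x => x * ((t/2) * x + (-(1+|μ2|)/V2 - |μ1|/V1))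
      + (-(1+|μ2|)^2/(2*V2) - |μ1|^2/(2*V1)) := by
    funext x
    simp only [hEdef, htdef]
    generalize |μ1| = A
    generalize |μ2| = B
    field_simp
    ring
  have hEtop : Tendsto E atTop atTop := by
    rw [hEq]
    refine tendsto_atTop_add_const_right _ _ ?_
    exact tendsto_id.atTop_mul_atTop₀
      (tendsto_atTop_add_const_right _ _ (Tendsto.const_mul_atTop (by positivity) tendsto_id))
  obtain ⟨Y0, hY0⟩ := eventually_atTop.mp (hEtop.eventually_ge_atTop 0)
  set Y : ℝ := max Y0 0 with hYdef
  have hY0' : ∀ x, Y ≤ x → 0 ≤ E x := fun x hx => hY0 x (le_trans (le_max_left _ _) hx)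
  have hYnn : 0 ≤ Y := le_max_right _ _
  -- the double integral is infinite
  have hinf : ∫⁻ x, ∫⁻ y, ENNReal.ofReal (rexp (t * (x*y)))
      ∂(gaussianReal μ2 (σ2^2)) ∂(gaussianReal μ1 (σ1^2)) = ∞ := by
    rw [eq_top_iff]
    calc (⊤ : ℝ≥0∞) = ENNReal.ofReal (c1*c2) * volume (Set.Ioi Y) := by
          rw [Real.volume_Ioi, ENNReal.mul_top (by positivity)]
    _ = ∫⁻ _ in Set.Ioi Y, ENNReal.ofReal (c1*c2) ∂volume := by
          rw [setLIntegral_const]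
    _ ≤ ∫⁻ x in Set.Ioi Y, gaussianPDF μ1 (σ1^2) x
          * ENNReal.ofReal (c2 * rexp (-(x+1+|μ2|)^2/(2*V2)) * rexp (t*x^2)) ∂volume := by
          refine setLIntegral_mono' measurableSet_Ioi fun x hx => ?_
          have hxY : Y ≤ x := le_of_lt hx
          have hxnn : 0 ≤ x := le_trans hYnn hxY
          rw [gaussianPDF, ← ENNReal.ofReal_mul (gaussianPDFReal_nonneg _ _ _)]
          refine ENNReal.ofReal_le_ofReal ?_
          have hpdf := gaussianPDFReal_ge μ1 (σ1^2) hv1 x hxnn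
          have hEnn := hY0' x hxY
          have hexp1 : (1:ℝ) ≤ rexp (E x) := by
            rw [← Real.exp_zero]; exact Real.exp_le_exp.mpr hEnn
          have key : c1 * rexp (-(x+|μ1|)^2/(2*V1))
              * (c2 * rexp (-(x+1+|μ2|)^2/(2*V2)) * rexp (t*x^2)) = c1*c2*rexp (E x) := by
            simp only [hEdef]
            rw [Real.exp_sub, Real.exp_sub, neg_div, neg_div, Real.exp_neg, Real.exp_neg]
            field_simp
          calc c1*c2 ≤ c1*c2*rexp (E x) :=
                le_mul_of_one_le_right (by positivity) hexp1
          _ = c1 * rexp (-(x+|μ1|)^2/(2*V1))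
              * (c2 * rexp (-(x+1+|μ2|)^2/(2*V2)) * rexp (t*x^2)) := key.symm
          _ ≤ gaussianPDFReal μ1 (σ1^2) x
              * (c2 * rexp (-(x+1+|μ2|)^2/(2*V2)) * rexp (t*x^2)) := by
              refine mul_le_mul_of_nonneg_right hpdf (by positivity)
    _ = ∫⁻ x in Set.Ioi Y,
          ENNReal.ofReal (c2 * rexp (-(x+1+|μ2|)^2/(2*V2)) * rexp (t*x^2))
          ∂(gaussianReal μ1 (σ1^2)) := by
          rw [gaussianReal_of_var_ne_zero μ1 hv1, restrict_withDensity measurableSet_Ioi,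
            lintegral_withDensity_eq_lintegral_mul _ (measurable_gaussianPDF _ _) (by fun_prop)]
          rfl
    _ ≤ ∫⁻ x in Set.Ioi Y, (∫⁻ y, ENNReal.ofReal (rexp (t * (x*y)))
          ∂(gaussianReal μ2 (σ2^2))) ∂(gaussianReal μ1 (σ1^2)) := by
          refine setLIntegral_mono' measurableSet_Ioi fun x hx => ?_
          exact inner_bound μ2 (σ2^2) hv2 t x (le_of_lt ht) (le_trans hYnn (le_of_lt hx))
    _ ≤ _ := setLIntegral_le_lintegral _ _
  rw [hdouble, hinf] at hfin
  exact absurd hfin (by simp)
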